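/- Let R ≥ 2 and let A : {0,1}^R → ℝ with A_b ≠ 0 for every b ∈ {0,1}^R, and let P(x_1,…,x_R) = Σ_{b ∈ {0,1}^R} A_b Π_{m : b_m = 1} x_m. Then P factors completely into R linear factors, P(x) = α·Π_{m=1}^R (C_m x_m + 1) for some real α, C_1,…,C_R (equivalently, the zero set of P decomposes as a union of R hyperplanes each of the form {x_m = const}), if and only if Δ_w = 0 for every w ∈ W_R, where for the wildcard w with wildcard slots i < j and base sequence b (w with both wildcard slots set to 0) the discriminant is Δ_w = A_b·A_{b+e_i+e_j} − A_{b+e_i}·A_{b+e_j}. -/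

import Mathlib

open Finset

section StackedDeckAux

open MvPolynomial

private lemma sd_prodX {R : ℕ} (s : Finset (Fin R)) :
    (∏ m ∈ s, (X m : MvPolynomial (Fin R) ℝ)) = monomial (∑ m ∈ s, Finsupp.single m 1) 1 := by
  induction s using Finset.induction with
  | empty => simp
  | insert _ _ h ih =>
      rw [Finset.prod_insert h, ih, Finset.sum_insert h, X, monomial_mul, one_mul]

private lemma sd_expapply {R : ℕ} (s : Finset (Fin R)) (k : Fin R) :
    (∑ m ∈ s, Finsupp.single m 1) k = if k ∈ s then 1 else 0 := by
  rw [Finsupp.finset_sum_apply]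
  simp [Finsupp.single_apply, Finset.sum_ite_eq' s k (fun _ => 1)]

private lemma sd_expinj {R : ℕ} (b b' : Fin R → Bool)
    (h : (∑ m ∈ univ.filter (fun m => b m = true), Finsupp.single m (1:ℕ))
       = ∑ m ∈ univ.filter (fun m => b' m = true), Finsupp.single m 1) : b = b' := by
  funext k
  have := DFunLike.congr_fun h k
  simp only [sd_expapply, Finset.mem_filter, Finset.mem_univ, true_and] at this
  cases hb : b k <;> cases hb' : b' k <;> simp_all

private lemma sd_indep {R : ℕ} (D : (Fin R → Bool) → ℝ)
    (h : ∀ x : Fin R → ℝ,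
      ∑ b : Fin R → Bool, D b * ∏ m ∈ univ.filter (fun m => b m = true), x m = 0) :
    ∀ b, D b = 0 := by
  intro b
  set p : MvPolynomial (Fin R) ℝ :=
    ∑ b : Fin R → Bool, C (D b) * ∏ m ∈ univ.filter (fun m => b m = true), X m with hp
  have hz : p = 0 := by
    apply MvPolynomial.funext
    intro x
    simp only [hp, map_sum, eval_mul, eval_C, eval_prod, eval_X, map_zero]
    exact h x
  have := congrArg (coeff (∑ m ∈ univ.filter (fun m => b m = true), Finsupp.single m 1)) hz
  rw [hp] at this
  simp only [coeff_sum, coeff_C_mul, sd_prodX, coeff_monomial, coeff_zero] at this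
  rw [Fintype.sum_eq_single b (fun b' hb' => ?_)] at this
  · simpa using this
  · rw [if_neg, mul_zero]
    exact fun hc => hb' (sd_expinj b' b hc)

end StackedDeckAux

private lemma sd_expand {R : ℕ} (C x : Fin R → ℝ) :
    (∏ m : Fin R, (C m * x m + 1)) =
      ∑ b : Fin R → Bool, ∏ m ∈ univ.filter (fun m => b m = true), (C m * x m) := by
  rw [Finset.prod_add]
  simp only [Finset.prod_const_one, mul_one]
  rw [Finset.powerset_univ]
  refine (Fintype.sum_bijective (fun b : Fin R → Bool => univ.filter (fun m => b m = true))
    ?_ _ _ ?_).symm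
  · constructor
    · intro b b' hbb'
      funext k
      have h1 : (k ∈ univ.filter (fun m => b m = true))
          = (k ∈ univ.filter (fun m => b' m = true)) := by
        simp only at hbb'; rw [hbb']
      simp only [Finset.mem_filter, Finset.mem_univ, true_and] at h1
      cases hb : b k <;> cases hb' : b' k <;> simp_all
    · intro t
      refine ⟨fun m => decide (m ∈ t), ?_⟩
      ext k; simp
  · intro b
    rfl

private lemma sd_coeffs {R : ℕ} (A : (Fin R → Bool) → ℝ) (α : ℝ) (C : Fin R → ℝ)
    (h : ∀ x : Fin R → ℝ,
      (∑ b : Fin R → Bool, A b * ∏ m ∈ univ.filter (fun m => b m = true), x m)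
        = α * ∏ m : Fin R, (C m * x m + 1)) :
    ∀ b, A b = α * ∏ m ∈ univ.filter (fun m => b m = true), C m := by
  have := sd_indep (fun b => A b - (α * ∏ m ∈ univ.filter (fun m => b m = true), C m)) ?_
  · intro b; have := this b; linarith
  · intro x
    simp only [sub_mul, Finset.sum_sub_distrib, h x, sd_expand, Finset.mul_sum, sub_eq_zero]
    congr 1; funext b
    rw [mul_assoc, ← Finset.prod_mul_distrib]

private lemma sd_filt_true {R : ℕ} (b : Fin R → Bool) (i : Fin R) (hbi : b i = false) :
    univ.filter (fun m => (Function.update b i true) m = true)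
      = insert i (univ.filter (fun m => b m = true)) := by
  ext k
  simp only [Finset.mem_filter, Finset.mem_univ, true_and, Finset.mem_insert,
    Function.update_apply]
  by_cases hk : k = i <;> simp [hk, hbi]

private lemma sd_filt_false {R : ℕ} (b : Fin R → Bool) (i : Fin R) :
    univ.filter (fun m => (Function.update b i false) m = true)
      = (univ.filter (fun m => b m = true)).erase i := by
  ext k
  simp only [Finset.mem_filter, Finset.mem_univ, true_and, Finset.mem_erase,
    Function.update_apply]
  by_cases hk : k = i <;> simp [hk]

private lemma sd_keylem {R : ℕ} (A : (Fin R → Bool) → ℝ) (hA : ∀ b, A b ≠ 0)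
    (hΔ : ∀ (i j : Fin R) (b : Fin R → Bool), i < j → (∀ m, m ≤ j → b m = false) →
        A b * A (Function.update (Function.update b i true) j true)
          - A (Function.update b i true) * A (Function.update b j true) = 0) :
    ∀ (n : ℕ) (b : Fin R → Bool), (univ.filter (fun m => b m = true)).card = n →
      A b = A (fun _ => false) *
        ∏ m ∈ univ.filter (fun m => b m = true),
          (A (Function.update (fun _ => false) m true) / A (fun _ => false)) := by
  intro n
  induction n using Nat.strong_induction_on with
  | _ n IH =>
  intro b hcard
  match n, hcard with
  | 0, hcard =>
    have hs : univ.filter (fun m => b m = true) = ∅ := Finset.card_eq_zero.mp hcard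
    have hb : b = fun _ => false := by
      funext k
      by_contra hk
      have : k ∈ univ.filter (fun m => b m = true) := by
        simp only [Finset.mem_filter, Finset.mem_univ, true_and]
        cases hbk : b k
        · exact absurd (by rw [hbk]) hk
        · rfl
      rw [hs] at this; exact absurd this (Finset.notMem_empty k)
    rw [hs, hb]; simp
  | 1, hcard =>
    obtain ⟨i, hi⟩ := Finset.card_eq_one.mp hcard
    have hb : b = Function.update (fun _ => false) i true := by
      funext k
      have hk : (k ∈ univ.filter (fun m => b m = true)) ↔ k = i := by rw [hi]; simp
      simp only [Finset.mem_filter, Finset.mem_univ, true_and] at hk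
      by_cases h : k = i
      · subst h; simp [hk.mpr rfl]
      · rw [Function.update_apply, if_neg h]
        cases hbk : b k
        · rfl
        · exact absurd (hk.mp hbk) h
    rw [hi, hb, Finset.prod_singleton, mul_div_cancel₀ _ (hA _)]
  | (n+2), hcard =>
    set s := univ.filter (fun m => b m = true) with hs
    have hne : s.Nonempty := Finset.card_pos.mp (by omega)
    set i := s.min' hne with hi
    have his : i ∈ s := Finset.min'_mem _ _
    have hne2 : (s.erase i).Nonempty := by
      apply Finset.card_pos.mp
      rw [Finset.card_erase_of_mem his, hcard]; omega
    set j := (s.erase i).min' hne2 with hj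
    have hjs' : j ∈ s.erase i := Finset.min'_mem _ _
    have hji : j ≠ i := Finset.ne_of_mem_erase hjs'
    have hjs : j ∈ s := Finset.mem_of_mem_erase hjs'
    have hij : i < j := lt_of_le_of_ne (Finset.min'_le _ _ hjs) (Ne.symm hji)
    have hbi : b i = true := by have := his; rw [hs] at this; simpa using this
    have hbj : b j = true := by have := hjs; rw [hs] at this; simpa using this
    set b' := Function.update (Function.update b i false) j false with hb'
    have hb'val : ∀ m, b' m = if m = j then false else if m = i then false else b m := by
      intro m
      simp only [hb', Function.update_apply]
    have h0 : ∀ m, m ≤ j → b' m = false := by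
      intro m hm
      rw [hb'val]
      by_cases hmj : m = j
      · simp [hmj]
      · rw [if_neg hmj]
        by_cases hmi : m = i
        · simp [hmi]
        · rw [if_neg hmi]
          by_contra hc
          have hbm : b m = true := by simpa using hc
          have hms : m ∈ s.erase i := by
            rw [Finset.mem_erase]
            exact ⟨hmi, by rw [hs]; simp [hbm]⟩
          have := Finset.min'_le _ _ hms
          rw [← hj] at this
          exact hmj (le_antisymm hm this)
    have key := hΔ i j b' hij h0
    have e1 : Function.update (Function.update b' i true) j true = b := by
      funext m
      simp only [Function.update_apply, hb'val]
      by_cases hmj : m = j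
      · simp [hmj, hbj]
      · rw [if_neg hmj, if_neg hmj]
        by_cases hmi : m = i
        · simp [hmi, hbi]
        · rw [if_neg hmi, if_neg hmi]
    have e2 : Function.update b' i true = Function.update b j false := by
      funext m
      simp only [Function.update_apply, hb'val]
      by_cases hmi : m = i
      · subst hmi
        rw [if_pos rfl, if_neg (Ne.symm hji), hbi]
      · rw [if_neg hmi]
        by_cases hmj : m = j <;> simp [hmj, hmi]
    have e3 : Function.update b' j true = Function.update b i false := by
      funext m
      simp only [Function.update_apply, hb'val]
      by_cases hmj : m = j
      · subst hmj
        rw [if_pos rfl, if_neg hji, hbj]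
      · rw [if_neg hmj, if_neg hmj]
    rw [e1, e2, e3] at key
    set t := (s.erase i).erase j with ht
    have hcb' : univ.filter (fun m => b' m = true) = t := by
      rw [hb', sd_filt_false, sd_filt_false, ← hs, ht]
    have hct : t.card = n := by
      rw [ht, Finset.card_erase_of_mem hjs', Finset.card_erase_of_mem his, hcard]; omega
    have hcbi : univ.filter (fun m => (Function.update b i false) m = true) = s.erase i := by
      rw [sd_filt_false, ← hs]
    have hcbj : univ.filter (fun m => (Function.update b j false) m = true) = s.erase j := by
      rw [sd_filt_false, ← hs]
    set A0 := A (fun _ => false) with hA0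
    set Cf := fun m => A (Function.update (fun _ => false) m true) / A0 with hCf
    have ih1 : A b' = A0 * ∏ m ∈ t, Cf m := by
      have := IH n (by omega) b' (by rw [hcb', hct])
      rwa [hcb'] at this
    have ih2 : A (Function.update b j false) = A0 * ∏ m ∈ s.erase j, Cf m := by
      have := IH (n+1) (by omega) (Function.update b j false)
        (by rw [hcbj, Finset.card_erase_of_mem hjs, hcard]; omega)
      rwa [hcbj] at this
    have ih3 : A (Function.update b i false) = A0 * ∏ m ∈ s.erase i, Cf m := by
      have := IH (n+1) (by omega) (Function.update b i false)
        (by rw [hcbi, Finset.card_erase_of_mem his, hcard]; omega)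
      rwa [hcbi] at this
    have hsi : s.erase i = insert j t := by
      rw [ht, Finset.insert_erase hjs']
    have hsj : s.erase j = insert i t := by
      have hie : i ∈ s.erase j := Finset.mem_erase.mpr ⟨Ne.symm hji, his⟩
      rw [ht, Finset.erase_right_comm, Finset.insert_erase hie]
    have hss : s = insert i (insert j t) := by
      rw [← hsi, Finset.insert_erase his]
    have hjt : j ∉ t := Finset.notMem_erase _ _
    have hit : i ∉ insert j t := by rw [← hsi]; exact Finset.notMem_erase _ _
    have hit' : i ∉ t := fun h => hit (Finset.mem_insert_of_mem h)
    rw [hss, Finset.prod_insert hit, Finset.prod_insert hjt]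
    rw [ih1, ih2, ih3, hsi, hsj, Finset.prod_insert hjt, Finset.prod_insert hit'] at key
    have hPt : ∏ m ∈ t, Cf m ≠ 0 := by
      apply Finset.prod_ne_zero_iff.mpr
      intro m _
      exact div_ne_zero (hA _) (hA _)
    have hA0ne : A0 ≠ 0 := hA _
    apply mul_left_cancel₀ (mul_ne_zero hA0ne hPt)
    nlinarith [key]

/-- **Factorization criterion via stacked-deck discriminants.**  A multilinear
polynomial `P(x) = Σ_b A_b Π_{m : b_m = 1} x_m` with all coefficients nonzero
factors completely into `R` linear factors `α·Π_m (C_m x_m + 1)` (equivalently,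
its zero set is a union of `R` coordinate-aligned hyperplanes) if and only if
`Δ_w = 0` for every stacked-deck wildcard `w ∈ W_R`, i.e. for all wildcard
slots `i < j` and every base sequence `b` vanishing at all positions `≤ j`,
`A_b·A_{b+e_i+e_j} − A_{b+e_i}·A_{b+e_j} = 0`. -/
theorem factorization_iff_stacked_deck_discriminants
    {R : ℕ} (hR : 2 ≤ R) (A : (Fin R → Bool) → ℝ) (hA : ∀ b, A b ≠ 0) :
    (∃ (α : ℝ) (C : Fin R → ℝ), ∀ x : Fin R → ℝ,
        (∑ b : Fin R → Bool, A b * ∏ m ∈ univ.filter (fun m => b m = true), x m)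
          = α * ∏ m : Fin R, (C m * x m + 1)) ↔
      (∀ (i j : Fin R) (b : Fin R → Bool), i < j → (∀ m, m ≤ j → b m = false) →
        A b * A (Function.update (Function.update b i true) j true)
          - A (Function.update b i true) * A (Function.update b j true) = 0) := by
  constructor
  · rintro ⟨α, C, h⟩ i j b hij hbz
    have hc := sd_coeffs A α C h
    have hbi : b i = false := hbz i hij.le
    have hbj : b j = false := hbz j le_rfl
    have hji : j ≠ i := Ne.symm hij.ne
    set s := univ.filter (fun m => b m = true) with hs
    have his : i ∉ s := by rw [hs]; simp [hbi]
    have hjs : j ∉ s := by rw [hs]; simp [hbj]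
    have f1 : univ.filter (fun m => (Function.update b i true) m = true) = insert i s :=
      sd_filt_true b i hbi
    have f2 : univ.filter (fun m => (Function.update b j true) m = true) = insert j s :=
      sd_filt_true b j hbj
    have hbij : (Function.update b i true) j = false := by
      rw [Function.update_apply, if_neg hji, hbj]
    have f3 : univ.filter (fun m => (Function.update (Function.update b i true) j true) m = true)
        = insert j (insert i s) := by
      rw [sd_filt_true _ j hbij, f1]
    have hjis : j ∉ insert i s := by
      simp only [Finset.mem_insert]
      rintro (h | h)
      · exact hji h
      · exact hjs h
    rw [hc b, hc (Function.update (Function.update b i true) j true),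
      hc (Function.update b i true), hc (Function.update b j true), f1, f2, f3, ← hs,
      Finset.prod_insert hjis, Finset.prod_insert his, Finset.prod_insert hjs]
    ring
  · intro hΔ
    refine ⟨A (fun _ => false),
      fun m => A (Function.update (fun _ => false) m true) / A (fun _ => false), fun x => ?_⟩
    rw [sd_expand, Finset.mul_sum]
    apply Finset.sum_congr rfl
    intro b _
    rw [sd_keylem A hA hΔ _ b rfl, mul_assoc, ← Finset.prod_mul_distrib]
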